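/- Let α be an interval coloring of G and let c_1 < c_2 be two colors each used on exactly one edge, e_1 = u_1v_1 with color c_1 and e_2 with color c_2. Let G' be the subgraph induced by edges with colors in [1, c_1] and G'' the subgraph induced by edges with colors in [c_1, c_2] (each on their incident vertices). Then V(G') ∩ V(G'') = {u_1, v_1} and the only common edge of G' and G'' is e_1. -/
import Mathlib


/-- An interval `t`-coloring of `G`: a proper edge-coloring with colors `1,…,t`
such that all colors are used and the set of colors incident to each vertex is
an interval of consecutive integers. -/
def IsIntervalColoring {V : Type*} (G : SimpleGraph V) (t : ℕ) (α : Sym2 V → ℕ) : Prop :=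
  (∀ e ∈ G.edgeSet, 1 ≤ α e ∧ α e ≤ t) ∧
  (∀ e ∈ G.edgeSet, ∀ e' ∈ G.edgeSet, e ≠ e' → (∃ v : V, v ∈ e ∧ v ∈ e') → α e ≠ α e') ∧
  (∀ c : ℕ, 1 ≤ c → c ≤ t → ∃ e ∈ G.edgeSet, α e = c) ∧
  (∀ v : V, ∀ c₁ c c₂ : ℕ,
    (∃ e ∈ G.edgeSet, v ∈ e ∧ α e = c₁) → (∃ e ∈ G.edgeSet, v ∈ e ∧ α e = c₂) →
    c₁ ≤ c → c ≤ c₂ → ∃ e ∈ G.edgeSet, v ∈ e ∧ α e = c)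

/-- For once-used colors `c₁ < c₂`, the subgraph on edges with colors in `[1, c₁]`
and the subgraph on edges with colors in `[c₁, c₂]` share exactly the vertices
`u₁, v₁` and exactly the edge `e₁ = u₁v₁` of color `c₁`. -/
theorem consecutive_color_subgraphs_intersection {V : Type*}
    (G : SimpleGraph V) (t : ℕ) (α : Sym2 V → ℕ)
    (hα : IsIntervalColoring G t α) (c₁ c₂ : ℕ) (hlt : c₁ < c₂)
    (u₁ v₁ : V) (e₂ : Sym2 V)
    (he₁ : s(u₁, v₁) ∈ G.edgeSet) (hc₁ : α s(u₁, v₁) = c₁)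
    (huniq₁ : ∀ e ∈ G.edgeSet, α e = c₁ → e = s(u₁, v₁))
    (he₂ : e₂ ∈ G.edgeSet) (hc₂ : α e₂ = c₂)
    (huniq₂ : ∀ e ∈ G.edgeSet, α e = c₂ → e = e₂) :
    {w : V | ∃ e ∈ G.edgeSet, w ∈ e ∧ α e ≤ c₁} ∩
      {w : V | ∃ e ∈ G.edgeSet, w ∈ e ∧ c₁ ≤ α e ∧ α e ≤ c₂} = {u₁, v₁} ∧
    {e ∈ G.edgeSet | α e ≤ c₁} ∩ {e ∈ G.edgeSet | c₁ ≤ α e ∧ α e ≤ c₂} =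
      {s(u₁, v₁)} := by
  obtain ⟨-, -, -, hint⟩ := hα
  constructor
  · ext w
    simp only [Set.mem_inter_iff, Set.mem_setOf_eq, Set.mem_insert_iff, Set.mem_singleton_iff]
    constructor
    · rintro ⟨⟨e, he, hwe, hle⟩, ⟨e', he', hwe', hge', hle'⟩⟩
      obtain ⟨f, hf, hwf, hcf⟩ := hint w (α e) c₁ (α e') ⟨e, he, hwe, rfl⟩
        ⟨e', he', hwe', rfl⟩ hle hge'
      have := huniq₁ f hf hcf
      subst this
      simpa [Sym2.mem_iff] using hwf
    · rintro (rfl | rfl)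
      · exact ⟨⟨s(w, v₁), he₁, by simp, hc₁.le⟩,
          ⟨s(w, v₁), he₁, by simp, hc₁.ge, hc₁ ▸ hlt.le⟩⟩
      · exact ⟨⟨s(u₁, w), he₁, by simp, hc₁.le⟩,
          ⟨s(u₁, w), he₁, by simp, hc₁.ge, hc₁ ▸ hlt.le⟩⟩
  · ext e
    simp only [Set.mem_inter_iff, Set.mem_setOf_eq, Set.mem_singleton_iff]
    constructor
    · rintro ⟨⟨he, hle⟩, -, hge, -⟩
      exact huniq₁ e he (le_antisymm hle hge)
    · rintro rfl
      exact ⟨⟨he₁, hc₁.le⟩, he₁, hc₁.ge, hc₁ ▸ hlt.le⟩
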